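/- Fix 0 < λ ≤ 1, K ≥ 0, reals 0 < a < b and c < d < 0, and ω > 0. Let ξ : ℝ² → ℂ satisfy |ξ(p) − ξ(q)| ≤ K·|p − q|^λ for all p, q, and ξ(x,y) = 0 whenever (x,y) ∉ [a,b] × [c,d]. Then for every complex τ with |Im τ| < π/(2ω), the second complex derivative of G(τ) = ∬_{ℝ²} ξ(x,y) · e^{τω} / (x e^{τω} − y)^{2} dx dy exists and equals G″(τ) = ω² ∬_{ℝ²} ξ(x,y) · e^{τω} (x² e^{2τω} + 4xy e^{τω} + y²) / (x e^{τω} − y)^{4} dx dy. -/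

import Mathlib

open MeasureTheory

private lemma lqsd_denom_ne (a b c d : ℝ) (ha : 0 < a) (hd : d < 0)
    (ω : ℝ) (hω : 0 < ω) (σ : ℂ) (hσ : |σ.im| < Real.pi / (2 * ω))
    (p : ℝ × ℝ) (hp : p ∈ Set.Icc a b ×ˢ Set.Icc c d) :
    (p.1 : ℂ) * Complex.exp (σ * ω) - (p.2 : ℂ) ≠ 0 := by
  intro h
  have hre : ((p.1 : ℂ) * Complex.exp (σ * ω) - (p.2 : ℂ)).re
      = p.1 * (Real.exp (σ.re * ω) * Real.cos (σ.im * ω)) - p.2 := by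
    simp [Complex.sub_re, Complex.mul_re, Complex.exp_re, Complex.exp_im,
      Complex.mul_im, Complex.ofReal_re, Complex.ofReal_im]
  have habs : |σ.im * ω| < Real.pi / 2 := by
    rw [abs_mul, abs_of_pos hω]
    have h1 : |σ.im| * ω < Real.pi / (2 * ω) * ω := mul_lt_mul_of_pos_right hσ hω
    have h2 : Real.pi / (2 * ω) * ω = Real.pi / 2 := by field_simp
    linarith [h2 ▸ h1]
  have hcos : 0 < Real.cos (σ.im * ω) :=
    Real.cos_pos_of_mem_Ioo ⟨neg_lt_of_abs_lt habs, lt_of_abs_lt habs⟩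
  have h1 : 0 < p.1 := lt_of_lt_of_le ha hp.1.1
  have h2 : p.2 < 0 := lt_of_le_of_lt hp.2.2 hd
  have hexp : 0 < Real.exp (σ.re * ω) := Real.exp_pos _
  have hz : ((p.1 : ℂ) * Complex.exp (σ * ω) - (p.2 : ℂ)).re = 0 := by rw [h]; simp
  rw [hre] at hz
  nlinarith [mul_pos h1 (mul_pos hexp hcos)]

private lemma lqsd_hasDerivAt_g0 (x y ω : ℝ) (σ : ℂ)
    (hD : (x : ℂ) * Complex.exp (σ * ω) - (y : ℂ) ≠ 0) :
    HasDerivAt (fun z : ℂ => Complex.exp (z * ω) / ((x : ℂ) * Complex.exp (z * ω) - (y : ℂ)) ^ 2)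
      ((ω : ℂ) * Complex.exp (σ * ω) / ((x : ℂ) * Complex.exp (σ * ω) - (y : ℂ)) ^ 2
        - 2 * ω * x * Complex.exp (σ * ω) ^ 2
          / ((x : ℂ) * Complex.exp (σ * ω) - (y : ℂ)) ^ 3) σ := by
  have hE : HasDerivAt (fun z : ℂ => Complex.exp (z * ω)) (Complex.exp (σ * ω) * ω) σ :=
    (hasDerivAt_mul_const (ω : ℂ)).cexp
  have hDd : HasDerivAt (fun z : ℂ => (x : ℂ) * Complex.exp (z * ω) - (y : ℂ))
      ((x : ℂ) * (Complex.exp (σ * ω) * ω)) σ := (hE.const_mul (x : ℂ)).sub_const _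
  have hD2 := hDd.pow 2
  have h := hE.div hD2 (pow_ne_zero 2 hD)
  refine h.congr_deriv ?_
  simp only [Pi.pow_apply]
  norm_num
  field_simp

private lemma lqsd_hasDerivAt_g1 (x y ω : ℝ) (σ : ℂ)
    (hD : (x : ℂ) * Complex.exp (σ * ω) - (y : ℂ) ≠ 0) :
    HasDerivAt (fun z : ℂ =>
        (ω : ℂ) * Complex.exp (z * ω) / ((x : ℂ) * Complex.exp (z * ω) - (y : ℂ)) ^ 2
          - 2 * ω * x * Complex.exp (z * ω) ^ 2
            / ((x : ℂ) * Complex.exp (z * ω) - (y : ℂ)) ^ 3)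
      ((ω : ℂ) ^ 2 * (Complex.exp (σ * ω)
          * ((x : ℂ) ^ 2 * Complex.exp (2 * σ * ω)
            + 4 * (x : ℂ) * (y : ℂ) * Complex.exp (σ * ω) + (y : ℂ) ^ 2)
        / ((x : ℂ) * Complex.exp (σ * ω) - (y : ℂ)) ^ 4)) σ := by
  have hE : HasDerivAt (fun z : ℂ => Complex.exp (z * ω)) (Complex.exp (σ * ω) * ω) σ :=
    (hasDerivAt_mul_const (ω : ℂ)).cexp
  have hDd : HasDerivAt (fun z : ℂ => (x : ℂ) * Complex.exp (z * ω) - (y : ℂ))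
      ((x : ℂ) * (Complex.exp (σ * ω) * ω)) σ := (hE.const_mul (x : ℂ)).sub_const _
  have hA := (hE.const_mul (ω : ℂ)).div (hDd.pow 2) (pow_ne_zero 2 hD)
  have hB := ((hE.pow 2).const_mul ((2 : ℂ) * ω * x)).div (hDd.pow 3) (pow_ne_zero 3 hD)
  have h := hA.sub hB
  refine h.congr_deriv ?_
  rw [show (2 : ℂ) * σ * ω = σ * ω + σ * ω by ring, Complex.exp_add]
  simp only [Pi.pow_apply]
  norm_num
  field_simp
  ring

private lemma lqsd_aux (a b c d : ℝ) (hab : a ≤ b) (hcd : c ≤ d)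
    (ξ : ℝ × ℝ → ℂ) (hξc : Continuous ξ)
    (hsupp : ∀ p : ℝ × ℝ, p ∉ Set.Icc a b ×ˢ Set.Icc c d → ξ p = 0)
    (g g' : ℂ → ℝ × ℝ → ℂ) (τ : ℂ) (ε B0 B1 : ℝ) (hε : 0 < ε)
    (hgm : ∀ σ ∈ Metric.ball τ ε, AEStronglyMeasurable (g σ) volume)
    (hg'm : AEStronglyMeasurable (g' τ) volume)
    (hB0 : ∀ p ∈ Set.Icc a b ×ˢ Set.Icc c d, ‖g τ p‖ ≤ B0)
    (hB1 : ∀ σ ∈ Metric.ball τ ε, ∀ p ∈ Set.Icc a b ×ˢ Set.Icc c d, ‖g' σ p‖ ≤ B1)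
    (hderiv : ∀ σ ∈ Metric.ball τ ε, ∀ p ∈ Set.Icc a b ×ˢ Set.Icc c d,
      HasDerivAt (fun z => g z p) (g' σ p) σ) :
    HasDerivAt (fun z => ∫ p : ℝ × ℝ, ξ p * g z p) (∫ p : ℝ × ℝ, ξ p * g' τ p) τ := by
  set box : Set (ℝ × ℝ) := Set.Icc a b ×ˢ Set.Icc c d with hboxdef
  have hmeas_box : MeasurableSet box := measurableSet_Icc.prod measurableSet_Icc
  have hcpt : IsCompact box := isCompact_Icc.prod isCompact_Icc
  obtain ⟨Cξ, hCξ⟩ := hcpt.exists_bound_of_continuousOn hξc.continuousOn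
  set C : ℝ := max Cξ 0 with hCdef
  have hCξ' : ∀ p, ‖ξ p‖ ≤ C := by
    intro p
    by_cases hp : p ∈ box
    · exact (hCξ p hp).trans (le_max_left _ _)
    · rw [hsupp p hp]; simp [hCdef]
  have hC0 : 0 ≤ C := le_max_right _ _
  have hint_ind : ∀ r : ℝ, Integrable (box.indicator fun _ => r) := fun r => by
    rw [integrable_indicator_iff hmeas_box]
    exact integrableOn_const hcpt.measure_lt_top.ne
  have hbound_aux : ∀ (h : ℝ × ℝ → ℂ) (B : ℝ), (∀ p ∈ box, ‖h p‖ ≤ B) →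
      ∀ p, ‖ξ p * h p‖ ≤ ‖box.indicator (fun _ => C * max B 0) p‖ := by
    intro h B hB p
    by_cases hp : p ∈ box
    · rw [Set.indicator_of_mem hp]
      calc ‖ξ p * h p‖ = ‖ξ p‖ * ‖h p‖ := norm_mul _ _
        _ ≤ C * max B 0 := mul_le_mul (hCξ' p) ((hB p hp).trans (le_max_left _ _))
            (norm_nonneg _) hC0
        _ ≤ ‖C * max B 0‖ := le_abs_self _
    · rw [hsupp p hp, Set.indicator_of_notMem hp]; simp
  have hmul_meas : ∀ σ ∈ Metric.ball τ ε, AEStronglyMeasurable (fun p => ξ p * g σ p) volume :=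
    fun σ hσ => hξc.aestronglyMeasurable.mul (hgm σ hσ)
  have hFint : Integrable (fun p : ℝ × ℝ => ξ p * g τ p) :=
    (hint_ind (C * max B0 0)).mono (hmul_meas τ (Metric.mem_ball_self hε))
      (Filter.Eventually.of_forall (hbound_aux (g τ) B0 hB0))
  have key := hasDerivAt_integral_of_dominated_loc_of_deriv_le (μ := volume)
    (F := fun σ p => ξ p * g σ p) (F' := fun σ p => ξ p * g' σ p)
    (bound := box.indicator fun _ => C * max B1 0) (Metric.ball_mem_nhds τ hε)
    (Filter.eventually_of_mem (Metric.ball_mem_nhds τ hε) hmul_meas)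
    hFint
    (hξc.aestronglyMeasurable.mul hg'm)
    (Filter.Eventually.of_forall fun p σ hσ => by
      calc ‖ξ p * g' σ p‖ ≤ ‖box.indicator (fun _ => C * max B1 0) p‖ := by
            by_cases hp : p ∈ box
            · rw [Set.indicator_of_mem hp]
              calc ‖ξ p * g' σ p‖ = ‖ξ p‖ * ‖g' σ p‖ := norm_mul _ _
                _ ≤ C * max B1 0 := mul_le_mul (hCξ' p)
                    ((hB1 σ hσ p hp).trans (le_max_left _ _)) (norm_nonneg _) hC0
                _ ≤ ‖C * max B1 0‖ := le_abs_self _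
            · rw [hsupp p hp, Set.indicator_of_notMem hp]; simp
        _ = box.indicator (fun _ => C * max B1 0) p := by
            by_cases hp : p ∈ box <;>
              simp [hp, abs_of_nonneg hC0, abs_of_nonneg (le_max_right B1 0)])
    (hint_ind (C * max B1 0))
    (Filter.Eventually.of_forall fun p σ hσ => by
      by_cases hp : p ∈ box
      · exact (hderiv σ hσ p hp).const_mul (ξ p)
      · simp only [hsupp p hp, zero_mul]
        exact hasDerivAt_const σ 0)
  exact key.2

theorem liouville_quakebend_second_deriv
    (lam K : ℝ) (hlam0 : 0 < lam) (hlam1 : lam ≤ 1) (hK : 0 ≤ K)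
    (a b c d : ℝ) (ha : 0 < a) (hab : a < b) (hcd : c < d) (hd : d < 0)
    (ω : ℝ) (hω : 0 < ω)
    (ξ : ℝ × ℝ → ℂ)
    (hHolder : ∀ p q : ℝ × ℝ, ‖ξ p - ξ q‖ ≤ K * dist p q ^ lam)
    (hsupp : ∀ x y : ℝ, (x, y) ∉ Set.Icc a b ×ˢ Set.Icc c d → ξ (x, y) = 0)
    (τ : ℂ) (hτ : |τ.im| < Real.pi / (2 * ω)) :
    HasDerivAt
      (deriv (fun τ : ℂ => ∫ p : ℝ × ℝ,
        ξ p * (Complex.exp (τ * ω) / ((p.1 : ℂ) * Complex.exp (τ * ω) - (p.2 : ℂ)) ^ 2)))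
      (((ω : ℂ)) ^ 2 * ∫ p : ℝ × ℝ,
        ξ p * (Complex.exp (τ * ω)
            * ((p.1 : ℂ) ^ 2 * Complex.exp (2 * τ * ω)
              + 4 * (p.1 : ℂ) * (p.2 : ℂ) * Complex.exp (τ * ω) + (p.2 : ℂ) ^ 2)
          / ((p.1 : ℂ) * Complex.exp (τ * ω) - (p.2 : ℂ)) ^ 4))
      τ := by
  -- continuity of ξ from the Hölder estimate
  have hξc : Continuous ξ := by
    rw [Metric.continuous_iff]
    intro p εc hεc
    rcases eq_or_lt_of_le hK with hK0 | hKpos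
    · refine ⟨1, one_pos, fun q _ => ?_⟩
      have := hHolder q p
      rw [← hK0, zero_mul] at this
      have h0 : ξ q = ξ p := by
        have := le_antisymm this (norm_nonneg _)
        rwa [norm_eq_zero, sub_eq_zero] at this
      simpa [h0, dist_self] using hεc
    · refine ⟨(εc / (2 * K)) ^ (1 / lam), Real.rpow_pos_of_pos
        (div_pos (by linarith) (by linarith)) _, fun q hq => ?_⟩
      have h1 : dist (ξ q) (ξ p) ≤ K * dist q p ^ lam := by
        rw [dist_eq_norm]; exact hHolder q p
      have h2 : dist q p ^ lam < ((εc / (2 * K)) ^ (1 / lam)) ^ lam :=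
        Real.rpow_lt_rpow dist_nonneg hq hlam0
      have h3 : ((εc / (2 * K)) ^ (1 / lam)) ^ lam = εc / (2 * K) := by
        rw [← Real.rpow_mul (le_of_lt (div_pos (by linarith) (by linarith))), one_div,
          inv_mul_cancel₀ (ne_of_gt hlam0), Real.rpow_one]
      rw [h3] at h2
      calc dist (ξ q) (ξ p) ≤ K * dist q p ^ lam := h1
        _ < K * (εc / (2 * K)) := mul_lt_mul_of_pos_left h2 hKpos
        _ = εc / 2 := by field_simp
        _ < εc := by linarith
  have hsupp' : ∀ p : ℝ × ℝ, p ∉ Set.Icc a b ×ˢ Set.Icc c d → ξ p = 0 := fun p hp =>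
    hsupp p.1 p.2 hp
  set box : Set (ℝ × ℝ) := Set.Icc a b ×ˢ Set.Icc c d with hboxdef
  have hcpt : IsCompact box := isCompact_Icc.prod isCompact_Icc
  set ε : ℝ := (Real.pi / (2 * ω) - |τ.im|) / 4 with hεdef
  have hε : 0 < ε := by simp only [hεdef]; linarith
  set KK : Set ℂ := Metric.closedBall τ (2 * ε) with hKKdef
  have hKKcpt : IsCompact KK := isCompact_closedBall _ _
  have hstrip : ∀ σ ∈ KK, |σ.im| < Real.pi / (2 * ω) := by
    intro σ hσ
    have h1 : |σ.im - τ.im| ≤ 2 * ε := by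
      calc |σ.im - τ.im| = |(σ - τ).im| := by rw [Complex.sub_im]
        _ ≤ ‖σ - τ‖ := Complex.abs_im_le_norm _
        _ = dist σ τ := (Complex.dist_eq σ τ).symm
        _ ≤ 2 * ε := Metric.mem_closedBall.mp hσ
    have h2 : |σ.im| ≤ |τ.im| + |σ.im - τ.im| := by
      calc |σ.im| = |τ.im + (σ.im - τ.im)| := by ring_nf
        _ ≤ |τ.im| + |σ.im - τ.im| := abs_add_le _ _
    simp only [hεdef] at h1
    linarith
  have hDne : ∀ σ ∈ KK, ∀ p ∈ box,
      (p.1 : ℂ) * Complex.exp (σ * ω) - (p.2 : ℂ) ≠ 0 := fun σ hσ p hp =>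
    lqsd_denom_ne a b c d ha hd ω hω σ (hstrip σ hσ) p hp
  -- continuity of the uncurried integrand families
  have hDcont : Continuous (fun q : ℂ × (ℝ × ℝ) =>
      (q.2.1 : ℂ) * Complex.exp (q.1 * ω) - (q.2.2 : ℂ)) := by fun_prop
  have hDne' : ∀ q ∈ KK ×ˢ box,
      (q.2.1 : ℂ) * Complex.exp (q.1 * ω) - (q.2.2 : ℂ) ≠ 0 := fun q hq =>
    hDne q.1 hq.1 q.2 hq.2
  have hcontG0 : ContinuousOn (fun q : ℂ × (ℝ × ℝ) =>
      Complex.exp (q.1 * ω) / ((q.2.1 : ℂ) * Complex.exp (q.1 * ω) - (q.2.2 : ℂ)) ^ 2)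
      (KK ×ˢ box) := by
    apply ContinuousOn.div (by fun_prop) ((hDcont.pow 2).continuousOn)
    exact fun q hq => pow_ne_zero 2 (hDne' q hq)
  have hcontG1 : ContinuousOn (fun q : ℂ × (ℝ × ℝ) =>
      (ω : ℂ) * Complex.exp (q.1 * ω)
          / ((q.2.1 : ℂ) * Complex.exp (q.1 * ω) - (q.2.2 : ℂ)) ^ 2
        - 2 * ω * q.2.1 * Complex.exp (q.1 * ω) ^ 2
          / ((q.2.1 : ℂ) * Complex.exp (q.1 * ω) - (q.2.2 : ℂ)) ^ 3) (KK ×ˢ box) := by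
    apply ContinuousOn.sub
    · apply ContinuousOn.div (by fun_prop) ((hDcont.pow 2).continuousOn)
      exact fun q hq => pow_ne_zero 2 (hDne' q hq)
    · apply ContinuousOn.div (by fun_prop) ((hDcont.pow 3).continuousOn)
      exact fun q hq => pow_ne_zero 3 (hDne' q hq)
  have hcontG2 : ContinuousOn (fun q : ℂ × (ℝ × ℝ) =>
      (ω : ℂ) ^ 2 * (Complex.exp (q.1 * ω)
          * ((q.2.1 : ℂ) ^ 2 * Complex.exp (2 * q.1 * ω)
            + 4 * (q.2.1 : ℂ) * (q.2.2 : ℂ) * Complex.exp (q.1 * ω) + (q.2.2 : ℂ) ^ 2)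
        / ((q.2.1 : ℂ) * Complex.exp (q.1 * ω) - (q.2.2 : ℂ)) ^ 4)) (KK ×ˢ box) := by
    apply ContinuousOn.mul continuousOn_const
    apply ContinuousOn.div (by fun_prop) ((hDcont.pow 4).continuousOn)
    exact fun q hq => pow_ne_zero 4 (hDne' q hq)
  obtain ⟨B0, hB0⟩ := (hKKcpt.prod hcpt).exists_bound_of_continuousOn hcontG0
  obtain ⟨B1, hB1⟩ := (hKKcpt.prod hcpt).exists_bound_of_continuousOn hcontG1
  obtain ⟨B2, hB2⟩ := (hKKcpt.prod hcpt).exists_bound_of_continuousOn hcontG2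
  -- measurability
  have hmD : ∀ σ : ℂ, Measurable (fun p : ℝ × ℝ =>
      (p.1 : ℂ) * Complex.exp (σ * ω) - (p.2 : ℂ)) := fun σ =>
    ((Complex.measurable_ofReal.comp measurable_fst).mul_const _).sub
      (Complex.measurable_ofReal.comp measurable_snd)
  have hm0 : ∀ σ : ℂ, AEStronglyMeasurable (fun p : ℝ × ℝ =>
      Complex.exp (σ * ω) / ((p.1 : ℂ) * Complex.exp (σ * ω) - (p.2 : ℂ)) ^ 2) volume :=
    fun σ => (measurable_const.div ((hmD σ).pow_const 2)).aestronglyMeasurable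
  have hm1 : ∀ σ : ℂ, AEStronglyMeasurable (fun p : ℝ × ℝ =>
      (ω : ℂ) * Complex.exp (σ * ω) / ((p.1 : ℂ) * Complex.exp (σ * ω) - (p.2 : ℂ)) ^ 2
        - 2 * ω * p.1 * Complex.exp (σ * ω) ^ 2
          / ((p.1 : ℂ) * Complex.exp (σ * ω) - (p.2 : ℂ)) ^ 3) volume := fun σ =>
    ((measurable_const.div ((hmD σ).pow_const 2)).sub
      ((((Complex.measurable_ofReal.comp measurable_fst).const_mul _).mul_const _).div
        ((hmD σ).pow_const 3))).aestronglyMeasurable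
  have hm2 : AEStronglyMeasurable (fun p : ℝ × ℝ =>
      (ω : ℂ) ^ 2 * (Complex.exp (τ * ω)
          * ((p.1 : ℂ) ^ 2 * Complex.exp (2 * τ * ω)
            + 4 * (p.1 : ℂ) * (p.2 : ℂ) * Complex.exp (τ * ω) + (p.2 : ℂ) ^ 2)
        / ((p.1 : ℂ) * Complex.exp (τ * ω) - (p.2 : ℂ)) ^ 4)) volume := by
    apply Measurable.aestronglyMeasurable
    have hnum : Measurable (fun p : ℝ × ℝ =>
        Complex.exp (τ * ω) * ((p.1 : ℂ) ^ 2 * Complex.exp (2 * τ * ω)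
          + 4 * (p.1 : ℂ) * (p.2 : ℂ) * Complex.exp (τ * ω) + (p.2 : ℂ) ^ 2)) := by
      apply Measurable.const_mul
      apply Measurable.add
      apply Measurable.add
      · exact ((Complex.measurable_ofReal.comp measurable_fst).pow_const 2).mul_const _
      · exact ((((Complex.measurable_ofReal.comp measurable_fst).const_mul _).mul
          (Complex.measurable_ofReal.comp measurable_snd)).mul_const _)
      · exact (Complex.measurable_ofReal.comp measurable_snd).pow_const 2
    exact ((hnum.div ((hmD τ).pow_const 4)).const_mul _)
  have hτKK : τ ∈ KK := Metric.mem_closedBall_self (by linarith)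
  -- first derivative, at every point of the ball around τ
  have claim1 : ∀ σ₀ ∈ Metric.ball τ ε,
      HasDerivAt (fun z : ℂ => ∫ p : ℝ × ℝ,
          ξ p * (Complex.exp (z * ω) / ((p.1 : ℂ) * Complex.exp (z * ω) - (p.2 : ℂ)) ^ 2))
        (∫ p : ℝ × ℝ, ξ p *
          ((ω : ℂ) * Complex.exp (σ₀ * ω)
              / ((p.1 : ℂ) * Complex.exp (σ₀ * ω) - (p.2 : ℂ)) ^ 2
            - 2 * ω * p.1 * Complex.exp (σ₀ * ω) ^ 2
              / ((p.1 : ℂ) * Complex.exp (σ₀ * ω) - (p.2 : ℂ)) ^ 3)) σ₀ := by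
    intro σ₀ hσ₀
    have hballKK : Metric.ball σ₀ ε ⊆ KK := by
      intro σ hσ
      rw [hKKdef, Metric.mem_closedBall]
      calc dist σ τ ≤ dist σ σ₀ + dist σ₀ τ := dist_triangle _ _ _
        _ ≤ ε + ε := add_le_add (le_of_lt (Metric.mem_ball.mp hσ))
            (le_of_lt (Metric.mem_ball.mp hσ₀))
        _ = 2 * ε := by ring
    exact lqsd_aux a b c d hab.le hcd.le ξ hξc hsupp'
      (fun z p => Complex.exp (z * ω) / ((p.1 : ℂ) * Complex.exp (z * ω) - (p.2 : ℂ)) ^ 2)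
      (fun z p => (ω : ℂ) * Complex.exp (z * ω)
          / ((p.1 : ℂ) * Complex.exp (z * ω) - (p.2 : ℂ)) ^ 2
        - 2 * ω * p.1 * Complex.exp (z * ω) ^ 2
          / ((p.1 : ℂ) * Complex.exp (z * ω) - (p.2 : ℂ)) ^ 3)
      σ₀ ε B0 B1 hε (fun σ _ => hm0 σ) (hm1 σ₀)
      (fun p hp => hB0 (σ₀, p) ⟨hballKK (Metric.mem_ball_self hε), hp⟩)
      (fun σ hσ p hp => hB1 (σ, p) ⟨hballKK hσ, hp⟩)
      (fun σ hσ p hp => lqsd_hasDerivAt_g0 p.1 p.2 ω σ (hDne σ (hballKK hσ) p hp))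
  -- second derivative at τ
  have hballKKτ : Metric.ball τ ε ⊆ KK := fun σ hσ =>
    Metric.mem_closedBall.mpr (le_trans (le_of_lt (Metric.mem_ball.mp hσ)) (by linarith))
  have claim2 : HasDerivAt (fun z : ℂ => ∫ p : ℝ × ℝ,
        ξ p * ((ω : ℂ) * Complex.exp (z * ω)
            / ((p.1 : ℂ) * Complex.exp (z * ω) - (p.2 : ℂ)) ^ 2
          - 2 * ω * p.1 * Complex.exp (z * ω) ^ 2
            / ((p.1 : ℂ) * Complex.exp (z * ω) - (p.2 : ℂ)) ^ 3))
      (∫ p : ℝ × ℝ, ξ p * ((ω : ℂ) ^ 2 * (Complex.exp (τ * ω)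
          * ((p.1 : ℂ) ^ 2 * Complex.exp (2 * τ * ω)
            + 4 * (p.1 : ℂ) * (p.2 : ℂ) * Complex.exp (τ * ω) + (p.2 : ℂ) ^ 2)
        / ((p.1 : ℂ) * Complex.exp (τ * ω) - (p.2 : ℂ)) ^ 4))) τ := by
    exact lqsd_aux a b c d hab.le hcd.le ξ hξc hsupp'
      (fun z p => (ω : ℂ) * Complex.exp (z * ω)
          / ((p.1 : ℂ) * Complex.exp (z * ω) - (p.2 : ℂ)) ^ 2
        - 2 * ω * p.1 * Complex.exp (z * ω) ^ 2
          / ((p.1 : ℂ) * Complex.exp (z * ω) - (p.2 : ℂ)) ^ 3)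
      (fun z p => (ω : ℂ) ^ 2 * (Complex.exp (z * ω)
          * ((p.1 : ℂ) ^ 2 * Complex.exp (2 * z * ω)
            + 4 * (p.1 : ℂ) * (p.2 : ℂ) * Complex.exp (z * ω) + (p.2 : ℂ) ^ 2)
        / ((p.1 : ℂ) * Complex.exp (z * ω) - (p.2 : ℂ)) ^ 4))
      τ ε B1 B2 hε (fun σ _ => hm1 σ) hm2
      (fun p hp => hB1 (τ, p) ⟨hτKK, hp⟩)
      (fun σ hσ p hp => hB2 (σ, p) ⟨hballKKτ hσ, hp⟩)
      (fun σ hσ p hp => lqsd_hasDerivAt_g1 p.1 p.2 ω σ (hDne σ (hballKKτ hσ) p hp))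
  -- identify deriv with the first-derivative integral near τ
  have heq : deriv (fun z : ℂ => ∫ p : ℝ × ℝ,
        ξ p * (Complex.exp (z * ω) / ((p.1 : ℂ) * Complex.exp (z * ω) - (p.2 : ℂ)) ^ 2))
      =ᶠ[nhds τ] (fun z : ℂ => ∫ p : ℝ × ℝ,
        ξ p * ((ω : ℂ) * Complex.exp (z * ω)
            / ((p.1 : ℂ) * Complex.exp (z * ω) - (p.2 : ℂ)) ^ 2
          - 2 * ω * p.1 * Complex.exp (z * ω) ^ 2
            / ((p.1 : ℂ) * Complex.exp (z * ω) - (p.2 : ℂ)) ^ 3)) :=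
    Filter.eventuallyEq_of_mem (Metric.ball_mem_nhds τ hε)
      (fun σ₀ hσ₀ => (claim1 σ₀ hσ₀).deriv)
  have hval : (∫ p : ℝ × ℝ, ξ p * ((ω : ℂ) ^ 2 * (Complex.exp (τ * ω)
          * ((p.1 : ℂ) ^ 2 * Complex.exp (2 * τ * ω)
            + 4 * (p.1 : ℂ) * (p.2 : ℂ) * Complex.exp (τ * ω) + (p.2 : ℂ) ^ 2)
        / ((p.1 : ℂ) * Complex.exp (τ * ω) - (p.2 : ℂ)) ^ 4)))
      = ((ω : ℂ)) ^ 2 * ∫ p : ℝ × ℝ,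
        ξ p * (Complex.exp (τ * ω)
            * ((p.1 : ℂ) ^ 2 * Complex.exp (2 * τ * ω)
              + 4 * (p.1 : ℂ) * (p.2 : ℂ) * Complex.exp (τ * ω) + (p.2 : ℂ) ^ 2)
          / ((p.1 : ℂ) * Complex.exp (τ * ω) - (p.2 : ℂ)) ^ 4) := by
    rw [← integral_const_mul]
    congr 1
    funext p
    ring
  rw [hval] at claim2
  exact claim2.congr_of_eventuallyEq heq
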